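/- Let T_1, T_2, ..., T_n be bounded linear operators on a complex Hilbert space H. Then ‖∑_{k=1}^n T_k‖² ≤ ∑_{j=1}^n ω( T_j* (∑_{k=1}^n T_k) ). -/

import Mathlib

open ContinuousLinearMap

/-- The numerical radius of a bounded linear operator on a complex Hilbert space:
`ω(T) = sup_{‖x‖ = 1} |⟨Tx, x⟩|`. -/
noncomputable def numRadius {H : Type*} [NormedAddCommGroup H] [InnerProductSpace ℂ H]
    (T : H →L[ℂ] H) : ℝ :=
  ⨆ x : {x : H // ‖x‖ = 1}, ‖(inner ℂ (T x) (x : H) : ℂ)‖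

lemma numRadius_nonneg {H : Type*} [NormedAddCommGroup H] [InnerProductSpace ℂ H]
    (T : H →L[ℂ] H) : 0 ≤ numRadius T :=
  Real.iSup_nonneg fun _ => norm_nonneg _

lemma norm_inner_le_numRadius {H : Type*} [NormedAddCommGroup H] [InnerProductSpace ℂ H]
    (T : H →L[ℂ] H) (x : H) (hx : ‖x‖ = 1) :
    ‖(inner ℂ (T x) x : ℂ)‖ ≤ numRadius T := by
  have hb : BddAbove (Set.range fun y : {y : H // ‖y‖ = 1} => ‖(inner ℂ (T y) (y : H) : ℂ)‖) := by
    refine ⟨‖T‖, ?_⟩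
    rintro _ ⟨y, rfl⟩
    calc ‖(inner ℂ (T y) (y : H) : ℂ)‖ ≤ ‖T (y : H)‖ * ‖(y : H)‖ := norm_inner_le_norm _ _
      _ ≤ (‖T‖ * ‖(y : H)‖) * ‖(y : H)‖ := by gcongr; exact T.le_opNorm _
      _ = ‖T‖ := by rw [y.2]; ring
  exact le_ciSup hb (⟨x, hx⟩ : {y : H // ‖y‖ = 1})

theorem norm_sq_sum_le_sum_numRadius
    {H : Type*} [NormedAddCommGroup H] [InnerProductSpace ℂ H] [CompleteSpace H]
    (n : ℕ) (T : Fin n → H →L[ℂ] H) :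
    ‖∑ k, T k‖ ^ 2 ≤ ∑ j, numRadius (adjoint (T j) ∘L (∑ k, T k)) := by
  set S := ∑ k, T k with hS
  set C := ∑ j, numRadius (adjoint (T j) ∘L S) with hC
  have hC0 : 0 ≤ C := Finset.sum_nonneg fun j _ => numRadius_nonneg _
  have key : ∀ x : H, ‖x‖ = 1 → ‖S x‖ ^ 2 ≤ C := by
    intro x hx
    have h1 : ((‖S x‖ : ℂ)) ^ 2 = ∑ j, (inner ℂ ((adjoint (T j) ∘L S) x) x : ℂ) := by
      have h2 : ∀ j : Fin n, (inner ℂ ((adjoint (T j) ∘L S) x) x : ℂ) = inner ℂ (S x) (T j x) := by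
        intro j
        simp [ContinuousLinearMap.adjoint_inner_left]
      rw [Finset.sum_congr rfl fun j _ => h2 j, ← inner_sum]
      have h3 : ∑ j : Fin n, T j x = S x := by
        rw [hS, ContinuousLinearMap.sum_apply]
      rw [h3, inner_self_eq_norm_sq_to_K]
      norm_cast
    have h4 : ‖S x‖ ^ 2 = ‖((‖S x‖ : ℂ)) ^ 2‖ := by
      simp [norm_pow]
    rw [h4, h1]
    calc ‖∑ j, (inner ℂ ((adjoint (T j) ∘L S) x) x : ℂ)‖
        ≤ ∑ j, ‖(inner ℂ ((adjoint (T j) ∘L S) x) x : ℂ)‖ := norm_sum_le _ _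
      _ ≤ C := Finset.sum_le_sum fun j _ => norm_inner_le_numRadius _ x hx
  have hnorm : ‖S‖ ≤ Real.sqrt C := by
    refine S.opNorm_le_bound (Real.sqrt_nonneg C) fun x => ?_
    rcases eq_or_ne x 0 with rfl | hx0
    · simp
    · have hxn : ‖x‖ ≠ 0 := norm_ne_zero_iff.mpr hx0
      set u : H := ‖x‖⁻¹ • x with hu
      have hu1 : ‖u‖ = 1 := by
        rw [hu, norm_smul]; simp [hxn]
      have h5 : ‖S u‖ ^ 2 ≤ C := key u hu1
      have h6 : ‖S u‖ ≤ Real.sqrt C := by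
        have := Real.sqrt_le_sqrt h5
        rwa [Real.sqrt_sq (norm_nonneg _)] at this
      have h7 : ‖S u‖ = ‖x‖⁻¹ * ‖S x‖ := by
        rw [hu, ContinuousLinearMap.map_smul_of_tower, norm_smul]; simp
      have := mul_le_mul_of_nonneg_left h6 (norm_nonneg x)
      rw [h7] at this
      calc ‖S x‖ = ‖x‖ * (‖x‖⁻¹ * ‖S x‖) := by field_simp
        _ ≤ ‖x‖ * Real.sqrt C := this
        _ = Real.sqrt C * ‖x‖ := mul_comm _ _
  calc ‖S‖ ^ 2 ≤ Real.sqrt C ^ 2 := by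
        gcongr
    _ = C := Real.sq_sqrt hC0
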